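/- arXiv:1910.11955 — 2 statements merged into one kernel-verified Lean document; each statement's English description precedes it below -/
import Mathlib

section
/- The formal power series F(q, x) = sum over d1, d0 >= 0 of ((4 d1 + d0)! / ((d1!)^4 * d0!)) * q^{d1} * x^{d0} in Q[[q, x]] satisfies the two equations: (i) theta_x F = x * (4 theta_q + theta_x + 1) F, and (ii) theta_q^4 F = q * (4 theta_q + theta_x + 1)(4 theta_q + theta_x + 2)(4 theta_q + theta_x + 3)(4 theta_q + theta_x + 4) F, where theta_q = q * d/dq and theta_x = x * d/dx are the logarithmic derivations on Q[[q, x]]. -/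
open PowerSeries

/-- `θ_q` on `ℚ[[x]][[q]]` (outer variable `q`): `θ_q(q^{d1} x^{d0}) = d1 q^{d1} x^{d0}`. -/
noncomputable def thetaQ (F : PowerSeries (PowerSeries ℚ)) : PowerSeries (PowerSeries ℚ) :=
  PowerSeries.mk fun d1 =>
    PowerSeries.C (d1 : ℚ) * PowerSeries.coeff d1 F

/-- `θ_x` on `ℚ[[x]][[q]]` (inner variable `x`): `θ_x(q^{d1} x^{d0}) = d0 q^{d1} x^{d0}`. -/
noncomputable def thetaX (F : PowerSeries (PowerSeries ℚ)) : PowerSeries (PowerSeries ℚ) :=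
  PowerSeries.mk fun d1 =>
    PowerSeries.mk fun d0 =>
      (d0 : ℚ) * PowerSeries.coeff d0 (PowerSeries.coeff d1 F)

/-- The operator `4θ_q + θ_x + k`. -/
noncomputable def opL (k : ℕ) (F : PowerSeries (PowerSeries ℚ)) : PowerSeries (PowerSeries ℚ) :=
  4 • thetaQ F + thetaX F + (k : ℚ) • F

/-- The period `F(q,x) = ∑ ((4d1+d0)!/((d1!)^4 d0!)) q^{d1} x^{d0}`. -/
noncomputable def FX1 : PowerSeries (PowerSeries ℚ) :=
  PowerSeries.mk fun d1 => PowerSeries.mk fun d0 =>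
    (Nat.factorial (4 * d1 + d0) : ℚ) /
      ((Nat.factorial d1 : ℚ) ^ 4 * (Nat.factorial d0 : ℚ))

/-- the coefficient extractor -/
noncomputable def cf (F : PowerSeries (PowerSeries ℚ)) (d1 d0 : ℕ) : ℚ :=
  PowerSeries.coeff d0 (PowerSeries.coeff d1 F)

noncomputable def A (d1 d0 : ℕ) : ℚ :=
  (Nat.factorial (4 * d1 + d0) : ℚ) /
      ((Nat.factorial d1 : ℚ) ^ 4 * (Nat.factorial d0 : ℚ))

lemma cf_FX1 (d1 d0 : ℕ) : cf FX1 d1 d0 = A d1 d0 := by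
  simp [cf, FX1, A]

lemma cf_thetaQ (F : PowerSeries (PowerSeries ℚ)) (d1 d0 : ℕ) :
    cf (thetaQ F) d1 d0 = (d1 : ℚ) * cf F d1 d0 := by
  simp only [cf, thetaQ, coeff_mk, coeff_C_mul]

lemma cf_thetaX (F : PowerSeries (PowerSeries ℚ)) (d1 d0 : ℕ) :
    cf (thetaX F) d1 d0 = (d0 : ℚ) * cf F d1 d0 := by
  simp [cf, thetaX]

lemma cf_opL (k : ℕ) (F : PowerSeries (PowerSeries ℚ)) (d1 d0 : ℕ) :
    cf (opL k F) d1 d0 = ((4 * d1 + d0 + k : ℕ) : ℚ) * cf F d1 d0 := by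
  simp only [opL, cf, map_add, map_nsmul, coeff_smul, smul_eq_mul]
  have h1 := cf_thetaQ F d1 d0
  have h2 := cf_thetaX F d1 d0
  simp only [cf] at h1 h2
  rw [h1, h2]
  push_cast
  ring

lemma A_rec_x (d1 d0 : ℕ) :
    ((d0 + 1 : ℕ) : ℚ) * A d1 (d0 + 1) = ((4 * d1 + d0 + 1 : ℕ) : ℚ) * A d1 d0 := by
  have h : 4 * d1 + (d0 + 1) = (4 * d1 + d0) + 1 := by ring
  have f1 : ((Nat.factorial d1 : ℚ)) ≠ 0 := Nat.cast_ne_zero.mpr (Nat.factorial_ne_zero _)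
  have f2 : ((Nat.factorial d0 : ℚ)) ≠ 0 := Nat.cast_ne_zero.mpr (Nat.factorial_ne_zero _)
  simp only [A, h, Nat.factorial_succ]
  push_cast
  field_simp

lemma A_rec_q (d1 d0 : ℕ) :
    ((d1 + 1 : ℕ) : ℚ) ^ 4 * A (d1 + 1) d0 =
      ((4 * d1 + d0 + 1 : ℕ) : ℚ) * ((4 * d1 + d0 + 2 : ℕ) : ℚ) *
        ((4 * d1 + d0 + 3 : ℕ) : ℚ) * ((4 * d1 + d0 + 4 : ℕ) : ℚ) * A d1 d0 := by
  have h : 4 * (d1 + 1) + d0 = (((4 * d1 + d0) + 1) + 1 + 1) + 1 := by ring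
  have f1 : ((Nat.factorial d1 : ℚ)) ≠ 0 := Nat.cast_ne_zero.mpr (Nat.factorial_ne_zero _)
  have f2 : ((Nat.factorial d0 : ℚ)) ≠ 0 := Nat.cast_ne_zero.mpr (Nat.factorial_ne_zero _)
  simp only [A, h, Nat.factorial_succ]
  push_cast
  field_simp
  ring

/-- `F` satisfies `θ_x F = x (4θ_q + θ_x + 1) F` and
`θ_q^4 F = q (4θ_q+θ_x+1)(4θ_q+θ_x+2)(4θ_q+θ_x+3)(4θ_q+θ_x+4) F`. -/
theorem X1tilde_picard_fuchs :
    (thetaX FX1 =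
      PowerSeries.C (PowerSeries.X : PowerSeries ℚ) * opL 1 FX1) ∧
    thetaQ (thetaQ (thetaQ (thetaQ FX1))) =
      PowerSeries.X * opL 1 (opL 2 (opL 3 (opL 4 FX1))) := by
  constructor
  · apply PowerSeries.ext; intro d1; apply PowerSeries.ext; intro d0
    have lhs : (coeff d0) ((coeff d1) (thetaX FX1)) = (d0 : ℚ) * A d1 d0 := by
      have := cf_thetaX FX1 d1 d0
      simp only [cf, cf_FX1 d1 d0] at this ⊢
      rw [this]
      have := cf_FX1 d1 d0
      simp only [cf] at this
      rw [this]
    rw [lhs, coeff_C_mul]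
    cases d0 with
    | zero => simp [coeff_zero_X_mul]
    | succ n =>
        rw [coeff_succ_X_mul]
        have := cf_opL 1 FX1 d1 n
        simp only [cf, cf_FX1] at this
        rw [this]
        have h := cf_FX1 d1 n; simp only [cf] at h; rw [h]
        have := A_rec_x d1 n
        push_cast at this ⊢
        linarith [this]
  · apply PowerSeries.ext; intro d1; apply PowerSeries.ext; intro d0
    have lhs : (coeff d0) ((coeff d1) (thetaQ (thetaQ (thetaQ (thetaQ FX1)))))
        = (d1 : ℚ) ^ 4 * A d1 d0 := by
      have h4 := cf_thetaQ (thetaQ (thetaQ (thetaQ FX1))) d1 d0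
      have h3 := cf_thetaQ (thetaQ (thetaQ FX1)) d1 d0
      have h2 := cf_thetaQ (thetaQ FX1) d1 d0
      have h1 := cf_thetaQ FX1 d1 d0
      have h0 := cf_FX1 d1 d0
      simp only [cf] at h4 h3 h2 h1 h0
      rw [h4, h3, h2, h1, h0]; ring
    rw [lhs]
    cases d1 with
    | zero => simp [coeff_zero_X_mul]
    | succ n =>
        rw [coeff_succ_X_mul]
        have e1 := cf_opL 1 (opL 2 (opL 3 (opL 4 FX1))) n d0
        have e2 := cf_opL 2 (opL 3 (opL 4 FX1)) n d0
        have e3 := cf_opL 3 (opL 4 FX1) n d0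
        have e4 := cf_opL 4 FX1 n d0
        have h0 := cf_FX1 n d0
        simp only [cf] at e1 e2 e3 e4 h0
        rw [e1, e2, e3, e4, h0]
        have := A_rec_q n d0
        push_cast at this ⊢
        nlinarith [this]
end

section
/- The formal power series F(q, y) = sum over d1, d0 >= 0 of ((4 d1)! * (d1 + d0)! / ((d1!)^5 * d0!)) * q^{d1} * y^{d0} in Q[[q, y]] satisfies: (i) theta_y F = y * (theta_q + theta_y + 1) F, and (ii) theta_q^4 F = 4 q * (4 theta_q + 1)(4 theta_q + 2)(4 theta_q + 3)(theta_q + theta_y + 1) F, where theta_q = q * d/dq and theta_y = y * d/dy. -/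
open PowerSeries

/-- `θ_y` on `ℚ[[y]][[q]]` (inner variable `y`). -/
noncomputable def thetaY (F : PowerSeries (PowerSeries ℚ)) : PowerSeries (PowerSeries ℚ) :=
  PowerSeries.mk fun d1 =>
    PowerSeries.mk fun d0 =>
      (d0 : ℚ) * PowerSeries.coeff d0 (PowerSeries.coeff d1 F)

/-- The operator `4θ_q + k`. -/
noncomputable def opM (k : ℕ) (F : PowerSeries (PowerSeries ℚ)) : PowerSeries (PowerSeries ℚ) :=
  4 • thetaQ F + (k : ℚ) • F

/-- The operator `θ_q + θ_y + 1`. -/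
noncomputable def opN (F : PowerSeries (PowerSeries ℚ)) : PowerSeries (PowerSeries ℚ) :=
  thetaQ F + thetaY F + F

/-- The period `F(q,y) = ∑ ((4d1)! (d1+d0)!/((d1!)^5 d0!)) q^{d1} y^{d0}`. -/
noncomputable def FX2 : PowerSeries (PowerSeries ℚ) :=
  PowerSeries.mk fun d1 => PowerSeries.mk fun d0 =>
    (Nat.factorial (4 * d1) : ℚ) * (Nat.factorial (d1 + d0) : ℚ) /
      ((Nat.factorial d1 : ℚ) ^ 5 * (Nat.factorial d0 : ℚ))

private lemma fQ (n : ℕ) : (Nat.factorial n : ℚ) ≠ 0 := by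
  exact_mod_cast Nat.factorial_ne_zero n

private lemma cQ (n d0 : ℕ) (F : PowerSeries (PowerSeries ℚ)) :
    PowerSeries.coeff d0 (PowerSeries.coeff n (thetaQ F)) =
      (n : ℚ) * PowerSeries.coeff d0 (PowerSeries.coeff n F) := by
  rw [thetaQ, PowerSeries.coeff_mk, PowerSeries.coeff_C_mul]

private lemma cY (n d0 : ℕ) (F : PowerSeries (PowerSeries ℚ)) :
    PowerSeries.coeff d0 (PowerSeries.coeff n (thetaY F)) =
      (d0 : ℚ) * PowerSeries.coeff d0 (PowerSeries.coeff n F) := by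
  simp [thetaY]

private lemma cN (n d0 : ℕ) (F : PowerSeries (PowerSeries ℚ)) :
    PowerSeries.coeff d0 (PowerSeries.coeff n (opN F)) =
      ((n : ℚ) + d0 + 1) * PowerSeries.coeff d0 (PowerSeries.coeff n F) := by
  simp [opN, cQ, cY]; ring

private lemma cM (k n d0 : ℕ) (F : PowerSeries (PowerSeries ℚ)) :
    PowerSeries.coeff d0 (PowerSeries.coeff n (opM k F)) =
      (4 * (n : ℚ) + k) * PowerSeries.coeff d0 (PowerSeries.coeff n F) := by
  rw [opM, map_add, map_nsmul, PowerSeries.coeff_smul, map_add, map_nsmul,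
    PowerSeries.coeff_smul, cQ]
  simp only [smul_eq_mul, nsmul_eq_mul, Nat.cast_ofNat]
  ring

private lemma cF (a b : ℕ) :
    PowerSeries.coeff b (PowerSeries.coeff a FX2) =
      (Nat.factorial (4 * a) : ℚ) * (Nat.factorial (a + b) : ℚ) /
        ((Nat.factorial a : ℚ) ^ 5 * (Nat.factorial b : ℚ)) := by
  simp [FX2]

set_option maxHeartbeats 1000000 in
/-- `F` satisfies `θ_y F = y (θ_q + θ_y + 1) F` and
`θ_q^4 F = 4 q (4θ_q+1)(4θ_q+2)(4θ_q+3)(θ_q+θ_y+1) F`. -/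
theorem X2tilde_picard_fuchs :
    (thetaY FX2 =
      PowerSeries.C (PowerSeries.X : PowerSeries ℚ) * opN FX2) ∧
    thetaQ (thetaQ (thetaQ (thetaQ FX2))) =
      4 • (PowerSeries.X * opM 1 (opM 2 (opM 3 (opN FX2)))) := by
  constructor
  · ext d1 : 1
    rw [PowerSeries.coeff_C_mul]
    ext d0 : 1
    cases d0 with
    | zero =>
      simp [thetaY]
    | succ n =>
      rw [PowerSeries.coeff_succ_X_mul, cY, cN, cF, cF,
        show d1 + (n + 1) = (d1 + n) + 1 from rfl, Nat.factorial_succ (d1 + n),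
        Nat.factorial_succ n]
      push_cast
      have h2 := fQ d1
      have h3 := fQ n
      field_simp
  · ext d1 : 1
    rw [map_nsmul]
    cases d1 with
    | zero =>
      simp [thetaQ]
    | succ n =>
      rw [PowerSeries.coeff_succ_X_mul]
      ext d0 : 1
      rw [map_nsmul, cQ, cQ, cQ, cQ, cF, cM, cM, cM, cN, cF]
      rw [show 4 * (n + 1) = (4 * n + 3) + 1 by ring, Nat.factorial_succ,
        Nat.factorial_succ (4 * n + 2), Nat.factorial_succ (4 * n + 1),
        Nat.factorial_succ (4 * n), Nat.factorial_succ n,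
        show (n + 1) + d0 = (n + d0) + 1 from Nat.succ_add n d0,
        Nat.factorial_succ (n + d0)]
      push_cast
      have h2 := fQ n
      have h3 := fQ d0
      rw [nsmul_eq_mul]
      field_simp
      ring
end
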